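/- Let F be the 10-vertex graph with vertices x_1,…,x_10, edges x_i x_{i+1} for 1 ≤ i ≤ 9, and the additional edge x_3 x_8. Then ex(n,F) ≤ ex(n,C_6) + 10n. -/

import Mathlib

open SimpleGraph

/-- `G` contains a copy of `H` (a subgraph isomorphic to `H`). -/
def Contains {V W : Type*} (G : SimpleGraph V) (H : SimpleGraph W) : Prop :=
  ∃ f : W → V, Function.Injective f ∧ ∀ ⦃a b : W⦄, H.Adj a b → G.Adj (f a) (f b)

/-- `G` is `H`-free. -/
def Free {V W : Type*} (G : SimpleGraph V) (H : SimpleGraph W) : Prop :=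
  ¬ Contains G H

/-- The number of edges of `G`. -/
noncomputable def eCard {V : Type*} (G : SimpleGraph V) : ℕ := Nat.card G.edgeSet

/-- The Turán number `ex(n, H)`. -/
noncomputable def exNum (n : ℕ) {W : Type*} (H : SimpleGraph W) : ℕ :=
  sSup {m | ∃ G : SimpleGraph (Fin n), _root_.Free G H ∧ m = eCard G}

/-- The graph `F`: a path `x₁ ⋯ x₁₀` together with the chord `x₃x₈`. -/
def FGraph : SimpleGraph (Fin 10) :=
  SimpleGraph.fromRel (fun i j => (i.val + 1 = j.val) ∨ (i.val = 2 ∧ j.val = 7))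

/-- Adjacency for the triangular pyramid: within a layer, or between consecutive layers. -/
def TPAdj (p q : ℕ × ℕ) : Prop :=
  (q.1 = p.1 ∧ q.2 = p.2 + 1) ∨ (q.1 = p.1 + 1 ∧ (q.2 = p.2 ∨ q.2 = p.2 + 1))

/-- The triangular pyramid with `k` layers; vertex `(i, t)` is `yₜⁱ`. -/
def TP (k : ℕ) : SimpleGraph {p : ℕ × ℕ // 1 ≤ p.2 ∧ p.2 ≤ p.1 ∧ p.1 ≤ k + 1} :=
  SimpleGraph.fromRel (fun p q => TPAdj p.1 q.1)

noncomputable def crossCount {V : Type*} (G : SimpleGraph V) (A B : Set V) : ℕ :=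
  Nat.card {p : V × V // p.1 ∈ A ∧ p.2 ∈ B ∧ G.Adj p.1 p.2}

/- ### Auxiliary material -/

instance : DecidableRel FGraph.Adj := fun a b =>
  decidable_of_iff _ (SimpleGraph.fromRel_adj _ a b).symm

/-- The restriction of `G` to edges inside a finset `S`. -/
def restrict {n : ℕ} (G : SimpleGraph (Fin n)) (S : Finset (Fin n)) : SimpleGraph (Fin n) where
  Adj v w := G.Adj v w ∧ v ∈ S ∧ w ∈ S
  symm := ⟨fun v w (h : G.Adj v w ∧ v ∈ S ∧ w ∈ S) =>
    (⟨h.1.symm, h.2.2, h.2.1⟩ : G.Adj w v ∧ w ∈ S ∧ v ∈ S)⟩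
  loopless := ⟨fun v (h : G.Adj v v ∧ v ∈ S ∧ v ∈ S) => G.irrefl h.1⟩

lemma eCard_le {n : ℕ} (G : SimpleGraph (Fin n)) : eCard G ≤ Nat.card (Sym2 (Fin n)) :=
  Nat.card_le_card_of_injective _ Subtype.val_injective

lemma le_exNum {n : ℕ} {W : Type*} {H : SimpleGraph W} (G : SimpleGraph (Fin n))
    (hG : _root_.Free G H) : eCard G ≤ exNum n H := by
  apply le_csSup
  · exact ⟨Nat.card (Sym2 (Fin n)), by rintro m ⟨G', _, rfl⟩; exact eCard_le G'⟩
  · exact ⟨G, hG, rfl⟩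

lemma eCard_erase {n : ℕ} (G : SimpleGraph (Fin n)) (S : Finset (Fin n)) (v : Fin n) :
    eCard (restrict G S) ≤ eCard (restrict G (S.erase v))
      + Nat.card ((restrict G S).neighborSet v) := by
  classical
  set R := restrict G S
  set R' := restrict G (S.erase v)
  have hsub : R.edgeSet ⊆ R'.edgeSet ∪ R.incidenceSet v := by
    intro e he
    induction e with
    | _ a b =>
      rw [mem_edgeSet] at he
      by_cases hv : v = a ∨ v = b
      · right; exact ⟨he, by rcases hv with h | h <;> simp [h, Sym2.mem_iff]⟩
      · push_neg at hv
        left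
        rw [mem_edgeSet]
        obtain ⟨hab, ha, hb⟩ : G.Adj a b ∧ a ∈ S ∧ b ∈ S := he
        exact ⟨hab, Finset.mem_erase.2 ⟨fun h => hv.1 h.symm, ha⟩,
          Finset.mem_erase.2 ⟨fun h => hv.2 h.symm, hb⟩⟩
  have h1 : eCard R ≤ (R'.edgeSet ∪ R.incidenceSet v).ncard := by
    rw [eCard, Nat.card_coe_set_eq]
    exact Set.ncard_le_ncard hsub (Set.toFinite _)
  have h2 : (R'.edgeSet ∪ R.incidenceSet v).ncard ≤ R'.edgeSet.ncard + (R.incidenceSet v).ncard :=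
    Set.ncard_union_le _ _
  have h3 : (R.incidenceSet v).ncard = Nat.card (R.neighborSet v) := by
    rw [← Nat.card_coe_set_eq]
    exact Nat.card_congr (R.incidenceSetEquivNeighborSet v)
  simp only [eCard, Nat.card_coe_set_eq] at h1 h3 ⊢
  omega

lemma pick {n : ℕ} {G : SimpleGraph (Fin n)} {S : Finset (Fin n)}
    (hdeg : ∀ v ∈ S, 11 ≤ Nat.card ((restrict G S).neighborSet v))
    {v : Fin n} (hv : v ∈ S) (T : Finset (Fin n)) (hT : T.card ≤ 9) :
    ∃ w, (restrict G S).Adj v w ∧ w ∉ T := by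
  set N := (restrict G S).neighborSet v with hN
  have h11 : 11 ≤ N.ncard := by rw [← Nat.card_coe_set_eq]; exact hdeg v hv
  have hd := Set.ncard_le_ncard_diff_add_ncard N (↑T) (Set.toFinite _)
  have hTn : (↑T : Set (Fin n)).ncard = T.card := Set.ncard_coe_finset T
  obtain ⟨w, hw⟩ := Set.nonempty_of_ncard_ne_zero (s := N \ ↑T) (by omega)
  exact ⟨w, hw.1, fun h => hw.2 (by simpa using h)⟩

/-- If every vertex of `S` has at least 11 neighbours inside `S`, then the restriction of an
`F`-free graph to `S` is `C₆`-free: any 6-cycle could be extended greedily by two pendant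
paths of length 2 to a copy of `F`. -/
lemma core_free {n : ℕ} (G : SimpleGraph (Fin n)) (S : Finset (Fin n))
    (hF : _root_.Free G FGraph)
    (hdeg : ∀ v ∈ S, 11 ≤ Nat.card ((restrict G S).neighborSet v)) :
    _root_.Free (restrict G S) (cycleGraph 6) := by
  rintro ⟨f, finj, fadj⟩
  set R := restrict G S with hR
  have a01 : R.Adj (f 0) (f 1) := fadj (by decide)
  have a12 : R.Adj (f 1) (f 2) := fadj (by decide)
  have a23 : R.Adj (f 2) (f 3) := fadj (by decide)
  have a34 : R.Adj (f 3) (f 4) := fadj (by decide)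
  have a45 : R.Adj (f 4) (f 5) := fadj (by decide)
  have a50 : R.Adj (f 5) (f 0) := fadj (by decide)
  have hfS : ∀ i : Fin 6, f i ∈ S := by
    intro i
    fin_cases i
    exacts [a01.2.1, a12.2.1, a23.2.1, a34.2.1, a45.2.1, a50.2.1]
  have hT6 : (Finset.image f Finset.univ).card ≤ 6 :=
    le_trans (Finset.card_image_le) (by simp)
  obtain ⟨p1, ap1, hp1T⟩ := pick hdeg (hfS 0) (Finset.image f Finset.univ) (by omega)
  have c1 : (insert p1 (Finset.image f Finset.univ)).card ≤ 7 :=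
    le_trans (Finset.card_insert_le _ _) (by omega)
  obtain ⟨p0, ap0, hp0T⟩ := pick hdeg ap1.2.2 (insert p1 (Finset.image f Finset.univ))
    (by omega)
  have c2 : (insert p0 (insert p1 (Finset.image f Finset.univ))).card ≤ 8 :=
    le_trans (Finset.card_insert_le _ _) (by omega)
  obtain ⟨q1, aq1, hq1T⟩ := pick hdeg (hfS 5)
    (insert p0 (insert p1 (Finset.image f Finset.univ))) (by omega)
  have c3 : (insert q1 (insert p0 (insert p1 (Finset.image f Finset.univ)))).card ≤ 9 :=
    le_trans (Finset.card_insert_le _ _) (by omega)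
  obtain ⟨q2, aq2, hq2T⟩ := pick hdeg aq1.2.2
    (insert q1 (insert p0 (insert p1 (Finset.image f Finset.univ)))) (by omega)
  simp only [Finset.mem_insert, Finset.mem_image, Finset.mem_univ, true_and, not_or,
    not_exists] at hp1T hp0T hq1T hq2T
  have hp1 : ∀ i, f i ≠ p1 := hp1T
  have hp0 : (∀ i, f i ≠ p0) ∧ p1 ≠ p0 := ⟨fun i h => hp0T.2 i h, fun h => hp0T.1 h.symm⟩
  have hq1 : (∀ i, f i ≠ q1) ∧ p1 ≠ q1 ∧ p0 ≠ q1 :=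
    ⟨fun i h => hq1T.2.2 i h, fun h => hq1T.2.1 h.symm, fun h => hq1T.1 h.symm⟩
  have hq2 : (∀ i, f i ≠ q2) ∧ p1 ≠ q2 ∧ p0 ≠ q2 ∧ q1 ≠ q2 :=
    ⟨fun i h => hq2T.2.2.2 i h, fun h => hq2T.2.2.1 h.symm, fun h => hq2T.2.1 h.symm,
      fun h => hq2T.1 h.symm⟩
  have hne : ∀ i j : Fin 6, i ≠ j → f i ≠ f j := fun i j h => finj.ne h
  apply hF
  refine ⟨([p0, p1, f 0, f 1, f 2, f 3, f 4, f 5, q1, q2].get : Fin 10 → Fin n), ?_, ?_⟩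
  · apply List.nodup_iff_injective_get.mp
    simp only [List.nodup_cons, List.mem_cons, List.not_mem_nil, List.mem_singleton,
      List.nodup_nil, or_false, not_or, and_true]
    repeat' apply And.intro
    all_goals
      first
        | exact id
        | exact trivial
        | exact (hp0.1 _).symm
        | exact (hp1 _).symm
        | exact hp0.2.symm
        | exact (hne _ _ (by decide))
        | exact hp1 _
        | exact hp0.1 _
        | exact hq1.1 _
        | exact hq2.1 _
        | exact hq1.2.1
        | exact hq1.2.2
        | exact hq2.2.1
        | exact hq2.2.2.1
        | exact hq2.2.2.2
  · have b01 : G.Adj (f 0) (f 1) := a01.1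
    have b12 : G.Adj (f 1) (f 2) := a12.1
    have b23 : G.Adj (f 2) (f 3) := a23.1
    have b34 : G.Adj (f 3) (f 4) := a34.1
    have b45 : G.Adj (f 4) (f 5) := a45.1
    have b50 : G.Adj (f 5) (f 0) := a50.1
    have bp1 : G.Adj (f 0) p1 := ap1.1
    have bp0 : G.Adj p1 p0 := ap0.1
    have bq1 : G.Adj (f 5) q1 := aq1.1
    have bq2 : G.Adj q1 q2 := aq2.1
    intro a b hab
    fin_cases a <;> fin_cases b <;>
      first
        | exact absurd hab (by decide)
        | exact b01 | exact b01.symm | exact b12 | exact b12.symm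
        | exact b23 | exact b23.symm | exact b34 | exact b34.symm
        | exact b45 | exact b45.symm | exact b50 | exact b50.symm
        | exact bp1 | exact bp1.symm | exact bp0 | exact bp0.symm
        | exact bq1 | exact bq1.symm | exact bq2 | exact bq2.symm

lemma core {n : ℕ} (G : SimpleGraph (Fin n)) (hF : _root_.Free G FGraph) (S : Finset (Fin n)) :
    eCard (restrict G S) ≤ exNum n (cycleGraph 6) + 10 * S.card := by
  classical
  induction S using Finset.strongInductionOn with
  | _ S ih =>
    by_cases h : ∃ v ∈ S, Nat.card ((restrict G S).neighborSet v) ≤ 10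
    · obtain ⟨v, hv, hd⟩ := h
      have h1 := eCard_erase G S v
      have h2 := ih (S.erase v) (Finset.erase_ssubset hv)
      have h3 : (S.erase v).card = S.card - 1 := Finset.card_erase_of_mem hv
      have h4 : 1 ≤ S.card := Finset.card_pos.mpr ⟨v, hv⟩
      omega
    · push_neg at h
      have hfree := core_free G S hF (fun v hv => h v hv)
      have := le_exNum _ hfree
      omega

/-- `ex(n, F) ≤ ex(n, C₆) + 10n`. -/
theorem stmt_2 (n : ℕ) :
    exNum n FGraph ≤ exNum n (cycleGraph 6) + 10 * n := by
  apply csSup_le'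
  rintro m ⟨G, hG, rfl⟩
  have h := core G hG Finset.univ
  have hres : restrict G Finset.univ = G := by
    ext a b
    simp [restrict]
  rw [hres] at h
  simpa using h
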